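/- If the symmetric part of a square matrix B is negative definite, then for sufficiently small step sizes the affine iteration θ_{k+1} = θ_k + α_k(Bθ_k + b) with α_k → 0, Σα_k = ∞ converges to θ* = -B^{-1}b. -/

import Mathlib

open Matrix Filter

private lemma dp_self_nonneg {p : ℕ} (x : Fin p → ℝ) : 0 ≤ x ⬝ᵥ x :=
  Finset.sum_nonneg fun i _ => mul_self_nonneg (x i)

/-- scaling: a bound on the unit sphere gives a global quadratic bound. -/
private lemma aux_scale {p : ℕ} (A : Matrix (Fin p) (Fin p) ℝ) (C : ℝ)
    (h : ∀ u : Fin p → ℝ, u ⬝ᵥ u = 1 → u ⬝ᵥ A.mulVec u ≤ C) :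
    ∀ x : Fin p → ℝ, x ⬝ᵥ A.mulVec x ≤ C * (x ⬝ᵥ x) := by
  intro x
  rcases eq_or_ne x 0 with rfl | hx
  · simp
  · have hQ : 0 < x ⬝ᵥ x :=
      lt_of_le_of_ne (dp_self_nonneg x) (Ne.symm (fun h0 => hx (dotProduct_self_eq_zero.mp h0)))
    set t : ℝ := Real.sqrt (x ⬝ᵥ x) with ht
    have ht0 : 0 < t := Real.sqrt_pos.mpr hQ
    have ht2 : t * t = x ⬝ᵥ x := Real.mul_self_sqrt (dp_self_nonneg x)
    have hu : (t⁻¹ • x) ⬝ᵥ (t⁻¹ • x) = 1 := by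
      rw [smul_dotProduct, dotProduct_smul, smul_eq_mul, smul_eq_mul, ← ht2]
      field_simp
    have key : x ⬝ᵥ A.mulVec x = (x ⬝ᵥ x) * ((t⁻¹ • x) ⬝ᵥ A.mulVec (t⁻¹ • x)) := by
      rw [mulVec_smul, smul_dotProduct, dotProduct_smul, smul_eq_mul, smul_eq_mul, ← ht2]
      field_simp
    rw [key, mul_comm C (x ⬝ᵥ x)]
    exact mul_le_mul_of_nonneg_left (h _ hu) hQ.le

/-- the quadratic form attains its max on the (nonempty) unit sphere. -/
private lemma aux_compact {p : ℕ} (A : Matrix (Fin p) (Fin p) ℝ)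
    (hne : ∃ u : Fin p → ℝ, u ⬝ᵥ u = 1) :
    ∃ u0 : Fin p → ℝ, u0 ⬝ᵥ u0 = 1 ∧
      ∀ u : Fin p → ℝ, u ⬝ᵥ u = 1 → u ⬝ᵥ A.mulVec u ≤ u0 ⬝ᵥ A.mulVec u0 := by
  set S : Set (Fin p → ℝ) := {u | u ⬝ᵥ u = 1} with hS
  have hcont : Continuous fun u : Fin p → ℝ => u ⬝ᵥ A.mulVec u :=
    continuous_id.dotProduct (continuous_const.matrix_mulVec continuous_id)
  have hclosed : IsClosed S :=
    isClosed_eq (continuous_id.dotProduct continuous_id) continuous_const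
  have hsub : S ⊆ Metric.closedBall 0 1 := by
    intro u hu
    have hu1 : u ⬝ᵥ u = 1 := hu
    rw [Metric.mem_closedBall, dist_zero_right]
    refine (pi_norm_le_iff_of_nonneg zero_le_one).mpr fun i => ?_
    rw [Real.norm_eq_abs, abs_le_one_iff_mul_self_le_one]
    have : u i * u i ≤ u ⬝ᵥ u := by
      refine Finset.single_le_sum (f := fun j => u j * u j)
        (fun j _ => mul_self_nonneg (u j)) (Finset.mem_univ i)
    simpa [hu1] using this
  have hcompact : IsCompact S :=
    (isCompact_closedBall (0 : Fin p → ℝ) 1).of_isClosed_subset hclosed hsub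
  obtain ⟨u0, hu0S, hmax⟩ := hcompact.exists_isMaxOn hne hcont.continuousOn
  exact ⟨u0, hu0S, fun u hu => hmax hu⟩

theorem stmt18 {p : ℕ} (B : Matrix (Fin p) (Fin p) ℝ)
    (hB : ∀ x : Fin p → ℝ, x ≠ 0 → x ⬝ᵥ B.mulVec x < 0)
    (b : Fin p → ℝ) (α : ℕ → ℝ) (hαpos : ∀ k, 0 < α k)
    (hαdiv : ¬ Summable α) (hα0 : Tendsto α atTop (nhds 0))
    (θ : ℕ → (Fin p → ℝ))
    (hrec : ∀ k, θ (k + 1) = θ k + α k • (B.mulVec (θ k) + b)) :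
    Tendsto θ atTop (nhds (-(B⁻¹.mulVec b))) := by
  rcases Nat.eq_zero_or_pos p with hp | hp
  · subst hp
    have : ∀ n, θ n = -(B⁻¹.mulVec b) := fun n => Subsingleton.elim _ _
    simp only [funext this]
    exact tendsto_const_nhds
  -- unit sphere is nonempty
  have hne : ∃ u : Fin p → ℝ, u ⬝ᵥ u = 1 := by
    refine ⟨Pi.single ⟨0, hp⟩ 1, ?_⟩
    simp [dotProduct, Pi.single_apply]
  -- the constant m
  obtain ⟨u0, hu0, hmax⟩ := aux_compact B hne
  have hu0ne : u0 ≠ 0 := fun h => by simp [h] at hu0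
  set m : ℝ := -(u0 ⬝ᵥ B.mulVec u0) with hm
  have hmpos : 0 < m := by simpa [hm] using hB u0 hu0ne
  have hmB : ∀ x : Fin p → ℝ, x ⬝ᵥ B.mulVec x ≤ -m * (x ⬝ᵥ x) := by
    intro x
    have := aux_scale B (-m) (fun u hu => by simpa [hm] using hmax u hu) x
    simpa using this
  -- the constant C
  obtain ⟨u1, hu1, hmax1⟩ := aux_compact (Bᵀ * B) hne
  set C : ℝ := max (u1 ⬝ᵥ (Bᵀ * B).mulVec u1) (max (m * m) 1) with hC
  have hCpos : 0 < C := lt_of_lt_of_le one_pos (le_trans (le_max_right _ _) (le_max_right _ _))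
  have hCm : m * m ≤ C := le_trans (le_max_left _ _) (le_max_right _ _)
  have hCB : ∀ x : Fin p → ℝ, (B.mulVec x) ⬝ᵥ (B.mulVec x) ≤ C * (x ⬝ᵥ x) := by
    intro x
    have h1 := aux_scale (Bᵀ * B) C
      (fun u hu => le_trans (hmax1 u hu) (le_max_left _ _)) x
    have h2 : x ⬝ᵥ (Bᵀ * B).mulVec x = (B.mulVec x) ⬝ᵥ (B.mulVec x) := by
      rw [← mulVec_mulVec, dotProduct_mulVec, vecMul_transpose]
    rwa [h2] at h1
  -- invertibility of B
  have hker : ∀ x : Fin p → ℝ, B.mulVec x = 0 → x = 0 := by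
    intro x hx
    by_contra h
    have := hB x h
    rw [hx, dotProduct_zero] at this
    exact lt_irrefl 0 this
  have hinj : Function.Injective B.mulVec := by
    intro x y hxy
    have h0 : B.mulVec (x - y) = 0 := by rw [mulVec_sub, hxy, sub_self]
    exact sub_eq_zero.mp (hker _ h0)
  have hdet : IsUnit B.det := (Matrix.isUnit_iff_isUnit_det B).mp
    (Matrix.mulVec_injective_iff_isUnit.mp hinj)
  set θs : Fin p → ℝ := -(B⁻¹.mulVec b) with hθs
  have hfix : B.mulVec θs = -b := by
    rw [hθs, mulVec_neg, mulVec_mulVec, Matrix.mul_nonsing_inv B hdet, one_mulVec]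
  -- error sequence
  set e : ℕ → (Fin p → ℝ) := fun k => θ k - θs with he
  set f : ℕ → ℝ := fun k => e k ⬝ᵥ e k with hf
  have hf0 : ∀ k, 0 ≤ f k := fun k => dp_self_nonneg (e k)
  have herec : ∀ k, e (k + 1) = e k + α k • B.mulVec (e k) := by
    intro k
    have hBe : B.mulVec (e k) = B.mulVec (θ k) + b := by
      rw [he]
      simp only [mulVec_sub, hfix, sub_neg_eq_add]
    rw [he]
    simp only [hrec k, hBe, mulVec_sub, hfix, sub_neg_eq_add]
    rw [add_sub_right_comm]
  -- one-step contraction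
  have hstep : ∀ k, α k * C ≤ m → f (k + 1) ≤ (1 - m * α k) * f k := by
    intro k hk
    have hexp : f (k + 1) = f k + (2 * α k) * (e k ⬝ᵥ B.mulVec (e k))
        + (α k * α k) * ((B.mulVec (e k)) ⬝ᵥ (B.mulVec (e k))) := by
      simp only [hf, herec k, add_dotProduct, dotProduct_add, smul_dotProduct,
        dotProduct_smul, smul_eq_mul, dotProduct_comm (B.mulVec (e k)) (e k)]
      ring
    have h1 : e k ⬝ᵥ B.mulVec (e k) ≤ -m * f k := hmB (e k)
    have h2 : (B.mulVec (e k)) ⬝ᵥ (B.mulVec (e k)) ≤ C * f k := hCB (e k)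
    have ha := (hαpos k).le
    nlinarith [hf0 k, mul_nonneg ha (hf0 k), mul_le_mul_of_nonneg_left h1 (mul_nonneg ha ha),
      mul_le_mul_of_nonneg_left h2 (mul_nonneg ha ha),
      mul_le_mul_of_nonneg_right hk (mul_nonneg ha (hf0 k))]
  have hfactor : ∀ k, α k * C ≤ m → 0 ≤ 1 - m * α k := by
    intro k hk
    have ha := (hαpos k).le
    nlinarith [mul_le_mul_of_nonneg_left hk hmpos.le]
  -- eventually small steps
  have hsmall : ∀ᶠ k in atTop, α k * C ≤ m := by
    have : ∀ᶠ k in atTop, α k < m / C :=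
      hα0.eventually (gt_mem_nhds (by positivity))
    filter_upwards [this] with k hk
    rw [← le_div_iff₀ hCpos]
    exact hk.le
  obtain ⟨N, hN⟩ := eventually_atTop.mp hsmall
  -- key exponential bound
  have key : ∀ n, N ≤ n → f n ≤ f N * Real.exp (-m * ∑ k ∈ Finset.Ico N n, α k) := by
    intro n hn
    induction n, hn using Nat.le_induction with
    | base => simp
    | succ n hn ih =>
      calc f (n + 1) ≤ (1 - m * α n) * f n := hstep n (hN n hn)
        _ ≤ Real.exp (-(m * α n)) * (f N * Real.exp (-m * ∑ k ∈ Finset.Ico N n, α k)) := by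
            exact mul_le_mul (Real.one_sub_le_exp_neg _) ih (hf0 n)
              (Real.exp_nonneg _)
        _ = f N * Real.exp (-m * ∑ k ∈ Finset.Ico N (n + 1), α k) := by
            rw [Finset.sum_Ico_succ_top hn,
              show -m * ((∑ k ∈ Finset.Ico N n, α k) + α n)
                = -(m * α n) + -m * ∑ k ∈ Finset.Ico N n, α k from by ring,
              Real.exp_add]
            ring
  -- the bound tends to 0
  have hsum : Tendsto (fun n => ∑ k ∈ Finset.range n, α k) atTop atTop :=
    (not_summable_iff_tendsto_nat_atTop_of_nonneg (fun k => (hαpos k).le)).mp hαdiv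
  have hIco : Tendsto (fun n => ∑ k ∈ Finset.Ico N n, α k) atTop atTop := by
    have h1 : Tendsto (fun n => (∑ k ∈ Finset.range n, α k)
        - ∑ k ∈ Finset.range N, α k) atTop atTop :=
      tendsto_atTop_add_const_right _ _ hsum
    refine h1.congr' ?_
    filter_upwards [eventually_ge_atTop N] with n hn
    rw [Finset.sum_Ico_eq_sub _ hn]
  have hbound : Tendsto (fun n => f N * Real.exp (-m * ∑ k ∈ Finset.Ico N n, α k))
      atTop (nhds 0) := by
    have h2 : Tendsto (fun n => -m * ∑ k ∈ Finset.Ico N n, α k) atTop atBot := by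
      have := hIco.const_mul_atTop hmpos
      have h3 : Tendsto (fun n => -(m * ∑ k ∈ Finset.Ico N n, α k)) atTop atBot :=
        tendsto_neg_atBot_iff.mpr this
      refine h3.congr fun n => by ring
    have h4 : Tendsto (fun n => Real.exp (-m * ∑ k ∈ Finset.Ico N n, α k)) atTop (nhds 0) :=
      Real.tendsto_exp_atBot.comp h2
    simpa using h4.const_mul (f N)
  -- f tends to 0
  have hfto0 : Tendsto f atTop (nhds 0) := by
    refine tendsto_of_tendsto_of_tendsto_of_le_of_le' tendsto_const_nhds hbound
      (Eventually.of_forall hf0) ?_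
    exact eventually_atTop.mpr ⟨N, key⟩
  -- conclude coordinatewise
  rw [tendsto_pi_nhds]
  intro i
  have hcoord : ∀ n, (θ n i - θs i) * (θ n i - θs i) ≤ f n := by
    intro n
    have : e n i * e n i ≤ ∑ j, e n j * e n j :=
      Finset.single_le_sum (f := fun j => e n j * e n j)
        (fun j _ => mul_self_nonneg _) (Finset.mem_univ i)
    simpa [hf, dotProduct, he] using this
  have hsq : Tendsto (fun n => (θ n i - θs i) * (θ n i - θs i)) atTop (nhds 0) :=
    tendsto_of_tendsto_of_tendsto_of_le_of_le tendsto_const_nhds hfto0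
      (fun n => mul_self_nonneg _) hcoord
  have habs : Tendsto (fun n => |θ n i - θs i|) atTop (nhds 0) := by
    have := (Real.continuous_sqrt.tendsto 0).comp hsq
    simp only [Function.comp_def, Real.sqrt_zero] at this
    refine this.congr fun n => ?_
    rw [← Real.sqrt_mul_self_eq_abs]
  have hdiff : Tendsto (fun n => θ n i - θs i) atTop (nhds 0) := by
    rw [tendsto_zero_iff_norm_tendsto_zero]
    simpa [Real.norm_eq_abs] using habs
  have := hdiff.add (tendsto_const_nhds (x := θs i))
  simp only [sub_add_cancel, zero_add] at this
  simpa [hθs] using this
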